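/- Fix an integer $k \geq 1$ and $i$ with $0 \leq i \leq k$. The polynomial $P_i(x) = (x-i)\prod_{0 \leq j \leq k, j \neq i}(x-j)^2 - 1 \in \mathbb{Z}[x]$ has no repeated complex roots. -/

import Mathlib

open Polynomial

private lemma sqfree_rat_aux (k : ℕ) (hk : 1 ≤ k) (P : Polynomial ℤ)
    (hmonic : P.Monic) (hdeg : P.natDegree = 2 * k + 1)
    (heval : ∀ m : ℕ, m ≤ k → P.eval (m : ℤ) = -1) :
    Squarefree (P.map (Int.castRingHom ℚ)) := by
  have hinj : Function.Injective (Int.castRingHom ℚ) := Int.cast_injective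
  have hPQmonic : (P.map (Int.castRingHom ℚ)).Monic := hmonic.map _
  rw [squarefree_iff_no_irreducibles hPQmonic.ne_zero]
  intro A hA hdvd
  rw [show (Int.castRingHom ℚ) = algebraMap ℤ ℚ from rfl] at hdvd hPQmonic hinj
  have hAdvd : A ∣ P.map (algebraMap ℤ ℚ) := (dvd_mul_right A A).trans hdvd
  obtain ⟨a, ha⟩ := IsIntegrallyClosed.eq_map_mul_C_of_dvd (K := ℚ) hmonic hAdvd
  set A' : ℚ[X] := a.map (algebraMap ℤ ℚ) with hA'
  have hA0 : A ≠ 0 := hA.ne_zero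
  have hlcA : A.leadingCoeff ≠ 0 := leadingCoeff_ne_zero.mpr hA0
  have hunit : IsUnit (C A.leadingCoeff) := isUnit_C.mpr hlcA.isUnit
  have hassoc : Associated A' A := ⟨hunit.unit, by simpa using ha⟩
  -- A' is monic
  have hA'monic : A'.Monic := by
    have h1 : A'.leadingCoeff * A.leadingCoeff = A.leadingCoeff := by
      conv_rhs => rw [← ha]
      rw [leadingCoeff_mul, leadingCoeff_C]
    exact mul_right_cancel₀ hlcA (h1.trans (one_mul A.leadingCoeff).symm)
  have hamonic : a.Monic := monic_of_injective hinj hA'monic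
  have hA'irr : Irreducible A' := hassoc.symm.irreducible hA
  have hda : 1 ≤ a.natDegree := by
    have := hA'irr.natDegree_pos
    rwa [hA', natDegree_map_eq_of_injective hinj] at this
  -- A' * A' divides P
  have hdvd' : A' * A' ∣ P.map (algebraMap ℤ ℚ) :=
    (Associated.mul_mul hassoc hassoc).dvd.trans hdvd
  obtain ⟨B, hB⟩ := hdvd'
  have hBmonic : B.Monic := by
    have h1 : (1 : ℚ) = A'.leadingCoeff * A'.leadingCoeff * B.leadingCoeff := by
      have := congrArg leadingCoeff hB
      rwa [hPQmonic.leadingCoeff, leadingCoeff_mul, leadingCoeff_mul] at this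
    rw [hA'monic.leadingCoeff, one_mul, one_mul] at h1
    rw [Monic.def]
    exact h1.symm
  have hBdvd : B ∣ P.map (algebraMap ℤ ℚ) := Dvd.intro_left _ hB.symm
  obtain ⟨b, hb⟩ := IsIntegrallyClosed.eq_map_mul_C_of_dvd (K := ℚ) hmonic hBdvd
  rw [hBmonic.leadingCoeff, map_one, mul_one] at hb
  have hbmonic : b.Monic := monic_of_injective hinj (by rw [hb]; exact hBmonic)
  -- P = a * a * b over ℤ
  have hfact : P = a * a * b := by
    apply map_injective (algebraMap ℤ ℚ) hinj
    rw [hB, Polynomial.map_mul, Polynomial.map_mul, hb]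
  -- evaluations
  have key : ∀ m : ℕ, m ≤ k → a.eval (m : ℤ) * a.eval (m : ℤ) = 1 ∧ b.eval (m : ℤ) = -1 := by
    intro m hm
    have he : a.eval (m : ℤ) * a.eval (m : ℤ) * b.eval (m : ℤ) = -1 := by
      have := heval m hm
      rw [hfact] at this
      simpa using this
    have hdvd1 : a.eval (m : ℤ) * a.eval (m : ℤ) ∣ 1 := dvd_neg.mp (Dvd.intro _ he)
    have hsq : a.eval (m : ℤ) * a.eval (m : ℤ) = 1 := by
      rcases Int.isUnit_iff.mp (isUnit_of_dvd_one hdvd1) with h | h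
      · exact h
      · nlinarith [mul_self_nonneg (a.eval (m : ℤ))]
    refine ⟨hsq, ?_⟩
    rw [hsq, one_mul] at he
    exact he
  -- degree count
  have hdeg' : 2 * k + 1 = a.natDegree + a.natDegree + b.natDegree := by
    rw [← hdeg, hfact, Monic.natDegree_mul (hamonic.mul hamonic) hbmonic,
      Monic.natDegree_mul hamonic hamonic]
  rcases Nat.eq_zero_or_pos b.natDegree with hb0 | hb1
  · -- b = 1, but b(0) = -1
    have hb1' : b = 1 := hbmonic.natDegree_eq_zero.mp hb0
    have := (key 0 (Nat.zero_le k)).2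
    rw [hb1'] at this
    simp at this
  · -- both a*a-1 and b+1 have k+1 roots
    have hcard : ((Finset.range (k + 1)).image (fun m : ℕ => (m : ℤ))).card = k + 1 := by
      rw [Finset.card_image_of_injective _ Nat.cast_injective, Finset.card_range]
    have hroots : ∀ q : ℤ[X], q ≠ 0 →
        (∀ m : ℕ, m ≤ k → q.eval (m : ℤ) = 0) → k + 1 ≤ q.natDegree := by
      intro q hq0 hq
      by_contra hlt
      push_neg at hlt
      apply hq0
      apply Polynomial.eq_zero_of_natDegree_lt_card_of_eval_eq_zero' q
        ((Finset.range (k + 1)).image (fun m : ℕ => (m : ℤ)))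
      · intro x hx
        obtain ⟨m, hm, rfl⟩ := Finset.mem_image.mp hx
        exact hq m (Nat.lt_succ_iff.mp (Finset.mem_range.mp hm))
      · omega
    have hbdeg : k + 1 ≤ b.natDegree := by
      have h1 : k + 1 ≤ (b + 1).natDegree := by
        apply hroots _ ?_ ?_
        · intro h
          have : b = -1 := by linear_combination h
          rw [this] at hb1; simp at hb1
        · intro m hm
          simp [(key m hm).2]
      calc k + 1 ≤ (b + 1).natDegree := h1
        _ = (b + C 1).natDegree := by norm_num
        _ = b.natDegree := natDegree_add_C
    have hadeg : k + 1 ≤ a.natDegree + a.natDegree := by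
      have h1 : k + 1 ≤ (a * a - 1).natDegree := by
        apply hroots _ ?_ ?_
        · intro h
          have haa : a * a = 1 := by linear_combination h
          have := Monic.natDegree_mul hamonic hamonic
          rw [haa, natDegree_one] at this
          omega
        · intro m hm
          simp [(key m hm).1]
      calc k + 1 ≤ (a * a - 1).natDegree := h1
        _ = (a * a - C 1).natDegree := by norm_num
        _ = (a * a).natDegree := natDegree_sub_C
        _ = a.natDegree + a.natDegree := Monic.natDegree_mul hamonic hamonic
    omega

open Polynomial in
/-- Fix `k ≥ 1` and `0 ≤ i ≤ k`. The polynomial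
`Pᵢ(x) = (x - i) ∏_{0 ≤ j ≤ k, j ≠ i} (x - j)² - 1 ∈ ℤ[x]` has no repeated complex roots,
i.e. it is squarefree as a polynomial over `ℂ`. -/
theorem statement10 (k : ℕ) (hk : 1 ≤ k) (i : ℕ) (hi : i ≤ k)
    (P : Polynomial ℤ)
    (hP : P = (X - C (i : ℤ)) * ∏ j ∈ (Finset.range (k + 1)).erase i, (X - C (j : ℤ)) ^ 2 - 1) :
    Squarefree (P.map (Int.castRingHom ℂ)) := by
  have hQm : Monic ((X - C (i : ℤ)) * ∏ j ∈ (Finset.range (k + 1)).erase i,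
      (X - C (j : ℤ)) ^ 2) :=
    (monic_X_sub_C _).mul (monic_prod_of_monic _ _ fun j _ => (monic_X_sub_C _).pow 2)
  have hmem : i ∈ Finset.range (k + 1) := Finset.mem_range.mpr (by omega)
  have hQdeg : ((X - C (i : ℤ)) * ∏ j ∈ (Finset.range (k + 1)).erase i,
      (X - C (j : ℤ)) ^ 2).natDegree = 2 * k + 1 := by
    rw [Monic.natDegree_mul (monic_X_sub_C _)
        (monic_prod_of_monic _ _ fun j _ => (monic_X_sub_C _).pow 2),
      natDegree_X_sub_C, natDegree_prod_of_monic _ _ fun j _ => (monic_X_sub_C _).pow 2]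
    have h2 : ∀ j ∈ (Finset.range (k + 1)).erase i, ((X - C (j : ℤ)) ^ 2).natDegree = 2 := by
      intro j _
      rw [natDegree_pow, natDegree_X_sub_C]
    rw [Finset.sum_congr rfl h2, Finset.sum_const, Finset.card_erase_of_mem hmem,
      Finset.card_range, smul_eq_mul]
    omega
  have hPdeg : P.natDegree = 2 * k + 1 := by
    rw [hP, show ((1 : ℤ[X]) = C 1) from C_1.symm, natDegree_sub_C, hQdeg]
  have hPmonic : P.Monic := by
    rw [hP, show ((1 : ℤ[X]) = C 1) from C_1.symm]
    refine hQm.sub_of_left ?_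
    rw [degree_C one_ne_zero, degree_eq_natDegree hQm.ne_zero, hQdeg]
    exact_mod_cast Nat.succ_pos _
  have heval : ∀ m : ℕ, m ≤ k → P.eval (m : ℤ) = -1 := by
    intro m hm
    rw [hP]
    simp only [eval_sub, eval_mul, eval_prod, eval_pow, eval_X, eval_C, eval_one]
    rcases eq_or_ne m i with rfl | hmi
    · simp
    · rw [Finset.prod_eq_zero (Finset.mem_erase.mpr
        ⟨hmi, Finset.mem_range.mpr (by omega)⟩) (by simp)]
      ring
  have hsf : Squarefree (P.map (Int.castRingHom ℚ)) :=
    sqfree_rat_aux k hk P hPmonic hPdeg heval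
  have hsep : (P.map (Int.castRingHom ℚ)).Separable :=
    PerfectField.separable_iff_squarefree.mpr hsf
  have hsep2 := hsep.map (f := algebraMap ℚ ℂ)
  rw [map_map] at hsep2
  have hcomp : (algebraMap ℚ ℂ).comp (Int.castRingHom ℚ) = Int.castRingHom ℂ :=
    Subsingleton.elim _ _
  rw [hcomp] at hsep2
  exact hsep2.squarefree
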